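/- (Shift-dependent harmonic Ritz problem.) Let A ∈ ℂ^{n×n}, σ ∈ ℂ with A + σI invertible, U ∈ ℂ^{n×k}, C = AU, and suppose W_{j+1} ∈ ℂ^{n×(j+1)s} and H̄_j ∈ ℂ^{(j+1)s×js} satisfy the block Arnoldi relation A W_j = W_{j+1} H̄_j, where W_j is the first js columns of W_{j+1}. Set V̂ = [U W_j] ∈ ℂ^{n×(k+js)}, Ŵ = [C W_{j+1}] ∈ ℂ^{n×(k+(j+1)s)}, G = the block diagonal matrix with diagonal blocks I_k and σĪ + H̄_j, and M = [σU 0] ∈ ℂ^{n×(k+js)}. Then for g ∈ ℂ^{k+js}, μ ∈ ℂ and y = (A + σI) V̂ g, the harmonic Ritz condition that (A + σI)⁻¹ y − μ y is orthogonal to every column of (A + σI) V̂ holds if and only if g satisfies the generalized eigenproblem (Ŵ G + M)* V̂ g = μ (Ŵ G + M)* (Ŵ G + M) g. -/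

import Mathlib

open Matrix

/-- The `a × b` "padded identity": ones on the diagonal `p = q`, zeros elsewhere. -/
def padId (a b : ℕ) : Matrix (Fin a) (Fin b) ℂ :=
  fun p q => if (p : ℕ) = (q : ℕ) then 1 else 0

lemma mul_padId {n a b : ℕ} (h : b ≤ a) (W : Matrix (Fin n) (Fin a) ℂ) :
    W * padId a b = W.submatrix id (Fin.castLE h) := by
  ext p q
  rw [mul_apply]
  rw [Finset.sum_eq_single (Fin.castLE h q)]
  · simp [padId]
  · intro r _ hr
    have : (r : ℕ) ≠ (q : ℕ) := fun hc => hr (Fin.ext hc)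
    simp [padId, this]
  · simp

/-- (Shift-dependent harmonic Ritz problem.)  With `C = AU`, a block
Arnoldi relation `A W_j = W_{j+1} H̄_j`, `V̂ = [U W_j]`, `Ŵ = [C W_{j+1}]`,
`G = blkdiag(I_k, σĪ + H̄_j)`, `M = [σU 0]` and `y = (A + σI) V̂ g`, the harmonic Ritz
condition `(A + σI)⁻¹ y − μ y ⟂ (A + σI)V̂ eₗ` for every column `eₗ` holds iff
`(ŴG + M)* V̂ g = μ (ŴG + M)*(ŴG + M) g`. -/
theorem shift_dependent_harmonic_ritz {n s j k : ℕ}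
    (A : Matrix (Fin n) (Fin n) ℂ) (σ : ℂ)
    (hinv : IsUnit (A + σ • (1 : Matrix (Fin n) (Fin n) ℂ)))
    (U C : Matrix (Fin n) (Fin k) ℂ) (hC : C = A * U)
    (W1 : Matrix (Fin n) (Fin ((j + 1) * s)) ℂ)
    (H : Matrix (Fin ((j + 1) * s)) (Fin (j * s)) ℂ)
    (hA : A * (W1.submatrix id (Fin.castLE (Nat.mul_le_mul (Nat.le_succ j) le_rfl)))
            = W1 * H)
    (Vhat : Matrix (Fin n) (Fin k ⊕ Fin (j * s)) ℂ)
    (hV : Vhat = Matrix.fromCols U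
        (W1.submatrix id (Fin.castLE (Nat.mul_le_mul (Nat.le_succ j) le_rfl))))
    (What : Matrix (Fin n) (Fin k ⊕ Fin ((j + 1) * s)) ℂ)
    (hW : What = Matrix.fromCols C W1)
    (G : Matrix (Fin k ⊕ Fin ((j + 1) * s)) (Fin k ⊕ Fin (j * s)) ℂ)
    (hG : G = Matrix.fromBlocks (1 : Matrix (Fin k) (Fin k) ℂ) 0 0
        (σ • padId ((j + 1) * s) (j * s) + H))
    (M : Matrix (Fin n) (Fin k ⊕ Fin (j * s)) ℂ)
    (hM : M = Matrix.fromCols (σ • U) (0 : Matrix (Fin n) (Fin (j * s)) ℂ))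
    (g : Fin k ⊕ Fin (j * s) → ℂ) (μ : ℂ) (y : Fin n → ℂ)
    (hy : y = ((A + σ • (1 : Matrix (Fin n) (Fin n) ℂ)) * Vhat).mulVec g) :
    (∀ c : Fin k ⊕ Fin (j * s),
        ∑ p, star (((A + σ • (1 : Matrix (Fin n) (Fin n) ℂ)) * Vhat) p c) *
          (((A + σ • (1 : Matrix (Fin n) (Fin n) ℂ))⁻¹.mulVec y - μ • y) p) = 0) ↔
    ((What * G + M)ᴴ * Vhat).mulVec g
      = μ • ((What * G + M)ᴴ * (What * G + M)).mulVec g := by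
  set S : Matrix (Fin n) (Fin n) ℂ := A + σ • (1 : Matrix (Fin n) (Fin n) ℂ) with hS
  set Wj := W1.submatrix id (Fin.castLE (Nat.mul_le_mul (Nat.le_succ j) le_rfl)) with hWj
  -- key identity : What * G + M = S * Vhat
  have key : What * G + M = S * Vhat := by
    rw [hW, hG, hM, hV, Matrix.fromCols_mul_fromBlocks]
    rw [hS, Matrix.add_mul, Matrix.mul_fromCols, Matrix.smul_mul,
      Matrix.mul_fromCols]
    have h1 : (1 : Matrix (Fin n) (Fin n) ℂ) * U = U := Matrix.one_mul U
    have h2 : (1 : Matrix (Fin n) (Fin n) ℂ) * Wj = Wj := Matrix.one_mul Wj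
    have hpad : W1 * padId ((j + 1) * s) (j * s) = Wj :=
      mul_padId (Nat.mul_le_mul (Nat.le_succ j) le_rfl) W1
    ext p q
    cases q with
    | inl q =>
        simp [Matrix.fromCols, Matrix.add_apply, hC]
    | inr q =>
        simp only [Matrix.fromCols, Matrix.add_apply, Matrix.smul_apply,
          Matrix.mul_zero, Matrix.zero_mul, Matrix.mul_smul, Matrix.mul_add,
          hpad, ← hA, ← hWj]
        simp [Matrix.add_apply, Matrix.smul_apply]
        ring
  -- inverse applied to y
  have hinvy : S⁻¹.mulVec y = Vhat.mulVec g := by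
    rw [hy, Matrix.mulVec_mulVec, ← Matrix.mul_assoc,
      Matrix.nonsing_inv_mul S ((Matrix.isUnit_iff_isUnit_det S).mp hinv), Matrix.one_mul]
  rw [key]
  have hsum : ∀ c : Fin k ⊕ Fin (j * s),
      ∑ p, star ((S * Vhat) p c) * ((S⁻¹.mulVec y - μ • y) p)
        = ((S * Vhat)ᴴ.mulVec (S⁻¹.mulVec y - μ • y)) c := by
    intro c
    simp [Matrix.mulVec, dotProduct, Matrix.conjTranspose_apply]
  have hveq : (S * Vhat)ᴴ.mulVec (S⁻¹.mulVec y - μ • y)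
      = ((S * Vhat)ᴴ * Vhat).mulVec g - μ • (((S * Vhat)ᴴ * (S * Vhat)).mulVec g) := by
    rw [hinvy, hy]
    simp [Matrix.mulVec_sub, Matrix.mulVec_smul, Matrix.mulVec_mulVec]
  constructor
  · intro h
    have h0 : (S * Vhat)ᴴ.mulVec (S⁻¹.mulVec y - μ • y) = 0 := by
      funext c; rw [← hsum c]; exact h c
    rw [hveq, sub_eq_zero] at h0
    exact h0
  · intro h c
    rw [hsum c, hveq, sub_eq_zero.mpr h]
    rfl
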